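/- Let q = 2^r, let G be an additive subgroup of F_q × F_q of order k ≥ 4 such that K = K_G is a k-arc, and let φ be the homology with axis ℓ∞ given by (X1,X2,X3) ↦ (λ·X1 + a1·X3, λ·X2 + a2·X3, X3) with λ ∈ F_q \ {0,1} and a1, a2 ∈ F_q, whose centre does not lie in K. If K ∩ φ(K) = ∅ and K' = K ∪ φ(K) is an arc (of size 2k), then there exists a blocking set of the secants of K' of minimum size 2k − 1 that is not contained in any line. -/

import Mathlib

open Projectivization

abbrev PGPoint (K : Type*) [Field K] := Projectivization K (Fin 3 → K)

lemma vec3_ne_zero_left {K : Type*} [Field K] {a b c : K} (h : a ≠ 0) :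
    ![a, b, c] ≠ 0 := fun hv => h (by simpa using congrFun hv 0)

lemma vec3_ne_zero_right {K : Type*} [Field K] {a b c : K} (h : c ≠ 0) :
    ![a, b, c] ≠ 0 := fun hv => h (by simpa using congrFun hv 2)

/-- The affine point `(a, b, 1)` of `PG(2,q)`. -/
def affPt {K : Type*} [Field K] (a b : K) : PGPoint K :=
  Projectivization.mk K ![a, b, 1] (vec3_ne_zero_right one_ne_zero)

/-- Three points of `PG(2,q)` are collinear if they lie in a common subspace
of projective dimension at most one. -/
def Coll3 {K : Type*} [Field K] (p q r : PGPoint K) : Prop :=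
  ∃ W : Submodule K (Fin 3 → K), Module.finrank K W ≤ 2 ∧
    p.submodule ≤ W ∧ q.submodule ≤ W ∧ r.submodule ≤ W

/-- An arc: a set of points no three of which are collinear. -/
def IsArc {K : Type*} [Field K] (S : Set (PGPoint K)) : Prop :=
  ∀ p ∈ S, ∀ q ∈ S, ∀ r ∈ S, p ≠ q → p ≠ r → q ≠ r → ¬ Coll3 p q r

/-- `B` is a blocking set of the secants of `S`. -/
def BlocksSecants {K : Type*} [Field K] (S B : Set (PGPoint K)) : Prop :=
  (∀ b ∈ B, b ∉ S) ∧ ∀ p ∈ S, ∀ q ∈ S, p ≠ q → ∃ b ∈ B, Coll3 p q b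

/-- Lines of `PG(2,q)` as point sets. -/
def IsLine {K : Type*} [Field K] (L : Set (PGPoint K)) : Prop :=
  ∃ W : Submodule K (Fin 3 → K), Module.finrank K W = 2 ∧
    L = {x : PGPoint K | x.submodule ≤ W}

/-- The line `ℓ∞ : X₃ = 0`. -/
def lInf (K : Type*) [Field K] : Set (PGPoint K) := {x : PGPoint K | x.rep 2 = 0}

/-- The point set `K_G = {(a, b, 1) : (a,b) ∈ G}`. -/
def KG {K : Type*} [Field K] (G : Set (K × K)) : Set (PGPoint K) :=
  (fun A : K × K => affPt A.1 A.2) '' G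

/-- The linear map underlying the elation `φ_A`, `A = (a₁, a₂)`. -/
def elationLin (K : Type*) [Field K] (a1 a2 : K) : (Fin 3 → K) →ₗ[K] (Fin 3 → K) where
  toFun v := ![v 0 + a1 * v 2, v 1 + a2 * v 2, v 2]
  map_add' u v := by funext i; fin_cases i <;> simp <;> ring
  map_smul' c v := by funext i; fin_cases i <;> simp <;> ring

lemma elationLin_injective {K : Type*} [Field K] (a1 a2 : K) :
    Function.Injective (elationLin K a1 a2) := by
  intro u v h
  have h0 := congrFun h 0
  have h1 := congrFun h 1
  have h2 := congrFun h 2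
  simp [elationLin] at h0 h1 h2
  rw [h2] at h0 h1
  have e0 : u 0 = v 0 := add_right_cancel h0
  have e1 : u 1 = v 1 := add_right_cancel h1
  funext i
  fin_cases i <;> assumption

/-- The elation `φ_A : (X₁,X₂,X₃) ↦ (X₁+a₁X₃, X₂+a₂X₃, X₃)` as a map on `PG(2,q)`. -/
def elation {K : Type*} [Field K] (a1 a2 : K) : PGPoint K → PGPoint K :=
  Projectivization.map (elationLin K a1 a2) (elationLin_injective a1 a2)

/-- The linear map underlying the homology
`(X₁,X₂,X₃) ↦ (λX₁+a₁X₃, λX₂+a₂X₃, X₃)`. -/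
def homologyLin (K : Type*) [Field K] (l a1 a2 : K) : (Fin 3 → K) →ₗ[K] (Fin 3 → K) where
  toFun v := ![l * v 0 + a1 * v 2, l * v 1 + a2 * v 2, v 2]
  map_add' u v := by funext i; fin_cases i <;> simp <;> ring
  map_smul' c v := by funext i; fin_cases i <;> simp <;> ring

lemma homologyLin_injective {K : Type*} [Field K] {l : K} (hl : l ≠ 0) (a1 a2 : K) :
    Function.Injective (homologyLin K l a1 a2) := by
  intro u v h
  have h0 := congrFun h 0
  have h1 := congrFun h 1
  have h2 := congrFun h 2
  simp [homologyLin] at h0 h1 h2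
  rw [h2] at h0 h1
  have e0 : u 0 = v 0 := mul_left_cancel₀ hl (add_right_cancel h0)
  have e1 : u 1 = v 1 := mul_left_cancel₀ hl (add_right_cancel h1)
  funext i
  fin_cases i <;> assumption

/-- The homology with axis `ℓ∞` as a map on `PG(2,q)`. -/
def homology {K : Type*} [Field K] {l : K} (hl : l ≠ 0) (a1 a2 : K) :
    PGPoint K → PGPoint K :=
  Projectivization.map (homologyLin K l a1 a2) (homologyLin_injective hl a1 a2)

lemma one_add_ne_zero {K : Type*} [Field K] [CharP K 2] {l : K} (h : l ≠ 1) :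
    1 + l ≠ 0 := by
  intro h0
  apply h
  have : l = -1 := by linear_combination h0
  rw [this, CharTwo.neg_eq]

lemma add_one_ne_zero' {K : Type*} [Field K] [CharP K 2] {l : K} (h : l ≠ 1) :
    l + 1 ≠ 0 := by rw [add_comm]; exact one_add_ne_zero h

lemma vec3_ne_zero_mid {K : Type*} [Field K] {a b c : K} (h : b ≠ 0) :
    ![a, b, c] ≠ 0 := fun hv => h (by simpa using congrFun hv 1)

lemma vec3_ne_zero_pair {K : Type*} [Field K] {A : K × K} (h : A ≠ (0, 0)) :
    ![A.1, A.2, 0] ≠ 0 := by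
  intro hv
  apply h
  have h0 := congrFun hv 0
  have h1 := congrFun hv 1
  simp at h0 h1
  exact Prod.ext h0 h1


namespace ArcAux

variable {K : Type*} [Field K]

lemma mk_eq_iff {v w : Fin 3 → K} (hv : v ≠ 0) (hw : w ≠ 0) :
    Projectivization.mk K v hv = Projectivization.mk K w hw ↔ ∃ μ : K, μ ≠ 0 ∧ v = μ • w := by
  rw [Projectivization.mk_eq_mk_iff]
  constructor
  · rintro ⟨a, ha⟩
    exact ⟨a, a.ne_zero, by rw [← ha, Units.smul_def]⟩
  · rintro ⟨μ, hμ, rfl⟩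
    exact ⟨Units.mk0 μ hμ, by rw [Units.smul_def]; rfl⟩

lemma mk3_eq_iff {x1 x2 x3 y1 y2 y3 : K} (hv : ![x1,x2,x3] ≠ 0) (hw : ![y1,y2,y3] ≠ 0) :
    Projectivization.mk K ![x1,x2,x3] hv = Projectivization.mk K ![y1,y2,y3] hw ↔
      ∃ μ : K, μ ≠ 0 ∧ x1 = μ * y1 ∧ x2 = μ * y2 ∧ x3 = μ * y3 := by
  rw [mk_eq_iff]
  constructor
  · rintro ⟨μ, hμ, h⟩
    have h0 := congrFun h 0
    have h1 := congrFun h 1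
    have h2 := congrFun h 2
    simp at h0 h1 h2
    exact ⟨μ, hμ, h0, h1, h2⟩
  · rintro ⟨μ, hμ, h0, h1, h2⟩
    refine ⟨μ, hμ, ?_⟩
    funext i
    fin_cases i <;> simpa

lemma mk_congr {v w : Fin 3 → K} (h : v = w) (hv : v ≠ 0) (hw : w ≠ 0) :
    Projectivization.mk K v hv = Projectivization.mk K w hw := by subst h; rfl

lemma coll3_span {u v w : Fin 3 → K} (hu : u ≠ 0) (hv : v ≠ 0) (hw : w ≠ 0)
    (h : w ∈ Submodule.span K {u, v}) :
    Coll3 (Projectivization.mk K u hu) (Projectivization.mk K v hv)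
      (Projectivization.mk K w hw) := by
  refine ⟨Submodule.span K {u, v}, ?_, ?_, ?_, ?_⟩
  · rw [Submodule.span_insert]
    refine (Submodule.finrank_add_le_finrank_add_finrank _ _).trans ?_
    have h1 : Module.finrank K (Submodule.span K {u}) = 1 := finrank_span_singleton hu
    have h2 : Module.finrank K (Submodule.span K {v}) = 1 := finrank_span_singleton hv
    omega
  · rw [Projectivization.submodule_mk]
    exact Submodule.span_mono (by simp)
  · rw [Projectivization.submodule_mk]
    exact Submodule.span_mono (by simp)
  · rw [Projectivization.submodule_mk]
    rwa [Submodule.span_singleton_le_iff_mem]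

end ArcAux

open scoped Classical in
/-- Direction point on `ℓ∞` determined by a nonzero `C ∈ G`. -/
noncomputable def dPt {K : Type*} [Field K] (C : K × K) : PGPoint K :=
  Projectivization.mk K ![C.1, C.2, if C = 0 then 1 else 0] (by
    split_ifs with h
    · exact vec3_ne_zero_right one_ne_zero
    · exact vec3_ne_zero_pair (fun e => h (by rw [e]; rfl)))

lemma dPt_eq {K : Type*} [Field K] {C : K × K} (h : C ≠ 0) :
    dPt C = Projectivization.mk K ![C.1, C.2, 0] (vec3_ne_zero_pair (fun e => h (by rw [e]; rfl))) := by
  apply ArcAux.mk_congr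
  simp [h]

/-- The auxiliary points `(λ c₁ + a₁, λ c₂ + a₂, λ + 1)`. -/
def qPt {K : Type*} [Field K] (l a1 a2 : K) (h3 : l + 1 ≠ 0) (C : K × K) : PGPoint K :=
  Projectivization.mk K ![l * C.1 + a1, l * C.2 + a2, l + 1] (vec3_ne_zero_right h3)

lemma homology_affPt {K : Type*} [Field K] {l : K} (hl0 : l ≠ 0) (a1 a2 x y : K) :
    homology hl0 a1 a2 (affPt x y) =
      Projectivization.mk K ![l * x + a1, l * y + a2, 1] (vec3_ne_zero_right one_ne_zero) := by
  unfold homology affPt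
  rw [Projectivization.map_mk]
  apply ArcAux.mk_congr
  funext i
  fin_cases i <;> simp [homologyLin]

lemma affPt_inj {K : Type*} [Field K] {x y x' y' : K} (h : affPt x y = affPt x' y') :
    x = x' ∧ y = y' := by
  rw [affPt, affPt, ArcAux.mk3_eq_iff] at h
  obtain ⟨μ, hμ, h0, h1, h2⟩ := h
  rw [mul_one] at h2
  subst h2
  rw [one_mul] at h0 h1
  exact ⟨h0, h1⟩


/-- if `K = K_G` is a translation `k`-arc, `k ≥ 4`, `φ` is a
homology with axis `ℓ∞` whose centre `(a₁, a₂, λ+1)` is not in `K`, and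
`K' = K ∪ φ(K)` is a `2k`-arc, then the secants of `K'` admit a blocking set
of minimum size `2k - 1` not contained in any line. -/
theorem doubling_by_homology_gives_nonlinear_blocking_set
    {r : ℕ} (hr : 1 ≤ r) {K : Type*} [Field K] [Fintype K] [CharP K 2]
    (hq : Fintype.card K = 2 ^ r)
    (G : AddSubgroup (K × K)) (k : ℕ) (hk4 : 4 ≤ k) (hk : Nat.card G = k)
    (harc : IsArc (KG (G : Set (K × K))))
    (l a1 a2 : K) (hl0 : l ≠ 0) (hl1 : l ≠ 1)
    (hcentre : Projectivization.mk K ![a1, a2, l + 1]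
        (vec3_ne_zero_right (add_one_ne_zero' hl1)) ∉ KG (G : Set (K × K)))
    (hdisj : KG (G : Set (K × K)) ∩ homology hl0 a1 a2 '' KG (G : Set (K × K)) = ∅)
    (harc' : IsArc (KG (G : Set (K × K)) ∪ homology hl0 a1 a2 '' KG (G : Set (K × K)))) :
    ∃ B : Set (PGPoint K),
      BlocksSecants (KG (G : Set (K × K)) ∪ homology hl0 a1 a2 '' KG (G : Set (K × K))) B ∧
      B.ncard = 2 * k - 1 ∧
      ¬ ∃ L : Set (PGPoint K), IsLine L ∧ B ⊆ L := by
  classical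
  have hl3 : l + 1 ≠ 0 := add_one_ne_zero' hl1
  have hadd : ∀ x : K, x + x = 0 := CharTwo.add_self_eq_zero
  have h2K : (2 : K) = 0 := CharTwo.two_eq_zero
  have hli : l⁻¹ * l = 1 := inv_mul_cancel₀ hl0
  have hzero : (0 : K × K) ∈ (G : Set (K × K)) := G.zero_mem
  -- char-2 cancellation in K × K
  have hP2 : ∀ A B : K × K, A + B = 0 → A = B := by
    intro A B h
    have hBB : B + B = 0 := by
      rw [Prod.ext_iff]
      constructor <;> simp [Prod.fst_add, Prod.snd_add, hadd]
    have hA : A = (A + B) + B := by rw [add_assoc, hBB, add_zero]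
    rw [h, zero_add] at hA
    exact hA
  -- K ∩ φ(K) = ∅ in pointwise form
  have hdisj' : ∀ A : K × K, A ∈ (G : Set (K × K)) → ∀ B : K × K, B ∈ (G : Set (K × K)) →
      affPt A.1 A.2 ≠ homology hl0 a1 a2 (affPt B.1 B.2) := by
    intro A hA B hB h
    have hmem : affPt A.1 A.2 ∈
        KG (G : Set (K × K)) ∩ homology hl0 a1 a2 '' KG (G : Set (K × K)) :=
      ⟨⟨A, hA, rfl⟩, ⟨affPt B.1 B.2, ⟨B, hB, rfl⟩, h.symm⟩⟩
    rw [hdisj] at hmem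
    exact hmem
  -- injectivity of the direction map on G \ {0}
  have hinjD : Set.InjOn dPt ((G : Set (K × K)) \ {0}) := by
    intro C hC C' hC' hEq
    obtain ⟨hCG, hC0⟩ := hC
    obtain ⟨hC'G, hC'0⟩ := hC'
    rw [Set.mem_singleton_iff] at hC0 hC'0
    by_contra hne
    rw [dPt_eq hC0, dPt_eq hC'0, ArcAux.mk3_eq_iff] at hEq
    obtain ⟨μ, hμ, h0, h1, _⟩ := hEq
    have hColl : Coll3 (affPt (0 : K) 0) (affPt C'.1 C'.2) (affPt C.1 C.2) := by
      unfold affPt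
      apply ArcAux.coll3_span
      rw [Submodule.mem_span_pair]
      refine ⟨1 - μ, μ, ?_⟩
      funext i
      fin_cases i <;> simp [h0, h1] <;> ring
    have hm0 : affPt (0 : K) 0 ∈ KG (G : Set (K × K)) := ⟨0, hzero, rfl⟩
    have hmC' : affPt C'.1 C'.2 ∈ KG (G : Set (K × K)) := ⟨C', hC'G, rfl⟩
    have hmC : affPt C.1 C.2 ∈ KG (G : Set (K × K)) := ⟨C, hCG, rfl⟩
    have hne1 : affPt (0 : K) 0 ≠ affPt C'.1 C'.2 := by
      intro h
      obtain ⟨e1, e2⟩ := affPt_inj h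
      exact hC'0 (Prod.ext_iff.mpr ⟨e1.symm, e2.symm⟩)
    have hne2 : affPt (0 : K) 0 ≠ affPt C.1 C.2 := by
      intro h
      obtain ⟨e1, e2⟩ := affPt_inj h
      exact hC0 (Prod.ext_iff.mpr ⟨e1.symm, e2.symm⟩)
    have hne3 : affPt C'.1 C'.2 ≠ affPt C.1 C.2 := by
      intro h
      obtain ⟨e1, e2⟩ := affPt_inj h
      exact hne (Prod.ext_iff.mpr ⟨e1, e2⟩).symm
    exact harc _ hm0 _ hmC' _ hmC hne1 hne2 hne3 hColl
  -- injectivity of the q-point map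
  have hinjQ : Function.Injective (qPt l a1 a2 hl3) := by
    intro C C' h
    rw [qPt, qPt, ArcAux.mk3_eq_iff] at h
    obtain ⟨μ, hμ, h0, h1, h3⟩ := h
    have hμ1 : (1 : K) = μ := mul_right_cancel₀ hl3 (by rw [one_mul]; exact h3)
    rw [← hμ1, one_mul] at h0 h1
    have e1 : C.1 = C'.1 := mul_left_cancel₀ hl0 (add_right_cancel h0)
    have e2 : C.2 = C'.2 := mul_left_cancel₀ hl0 (add_right_cancel h1)
    exact Prod.ext_iff.mpr ⟨e1, e2⟩
  refine ⟨dPt '' ((G : Set (K × K)) \ {0}) ∪ qPt l a1 a2 hl3 '' (G : Set (K × K)),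
    ⟨?_, ?_⟩, ?_, ?_⟩
  · -- no point of B lies on K'
    rintro b (⟨C, ⟨hCG, hC0⟩, rfl⟩ | ⟨C, hCG, rfl⟩) hmem
    · rw [Set.mem_singleton_iff] at hC0
      rcases hmem with ⟨A, hA, hEq⟩ | ⟨p, ⟨A, hA, rfl⟩, hEq⟩
      · rw [dPt_eq hC0] at hEq
        unfold affPt at hEq
        rw [ArcAux.mk3_eq_iff] at hEq
        obtain ⟨μ, hμ, _, _, h3⟩ := hEq
        rw [mul_zero] at h3
        exact one_ne_zero h3
      · rw [homology_affPt hl0, dPt_eq hC0, ArcAux.mk3_eq_iff] at hEq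
        obtain ⟨μ, hμ, _, _, h3⟩ := hEq
        rw [mul_zero] at h3
        exact one_ne_zero h3
    · -- the q-point case: use the arc property of K'
      have hPA : affPt C.1 C.2 ∈
          KG (G : Set (K × K)) ∪ homology hl0 a1 a2 '' KG (G : Set (K × K)) :=
        Or.inl ⟨C, hCG, rfl⟩
      have hPf0 : homology hl0 a1 a2 (affPt (0 : K) 0) ∈
          KG (G : Set (K × K)) ∪ homology hl0 a1 a2 '' KG (G : Set (K × K)) :=
        Or.inr ⟨affPt (0 : K) 0, ⟨0, hzero, rfl⟩, rfl⟩
      have hne : affPt C.1 C.2 ≠ homology hl0 a1 a2 (affPt (0 : K) 0) := by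
        have := hdisj' C hCG 0 hzero
        simpa using this
      by_cases e1 : qPt l a1 a2 hl3 C = affPt C.1 C.2
      · rw [qPt, affPt, ArcAux.mk3_eq_iff] at e1
        obtain ⟨μ, hμ, h0, h1, h3⟩ := e1
        rw [mul_one] at h3
        subst h3
        apply hne
        rw [homology_affPt hl0, affPt]
        apply ArcAux.mk_congr
        have ea1 : a1 = C.1 := by linear_combination h0
        have ea2 : a2 = C.2 := by linear_combination h1
        funext i
        fin_cases i <;> simp [ea1, ea2]
      by_cases e2 : qPt l a1 a2 hl3 C = homology hl0 a1 a2 (affPt (0 : K) 0)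
      · rw [qPt, homology_affPt hl0, ArcAux.mk3_eq_iff] at e2
        obtain ⟨μ, hμ, h0, h1, h3⟩ := e2
        rw [mul_one] at h3
        subst h3
        apply hne
        rw [homology_affPt hl0, affPt]
        apply ArcAux.mk_congr
        have ec1 : C.1 = a1 := by
          have : l * C.1 = l * a1 := by linear_combination h0
          exact mul_left_cancel₀ hl0 this
        have ec2 : C.2 = a2 := by
          have : l * C.2 = l * a2 := by linear_combination h1
          exact mul_left_cancel₀ hl0 this
        funext i
        fin_cases i <;> simp [ec1, ec2]
      have hColl : Coll3 (affPt C.1 C.2) (homology hl0 a1 a2 (affPt (0 : K) 0))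
          (qPt l a1 a2 hl3 C) := by
        rw [homology_affPt hl0]
        unfold affPt qPt
        apply ArcAux.coll3_span
        rw [Submodule.mem_span_pair]
        refine ⟨l, 1, ?_⟩
        funext i
        fin_cases i <;> simp <;> ring
      exact harc' _ hPA _ hPf0 _ hmem hne (fun h => e1 h.symm) (fun h => e2 h.symm) hColl
  · -- B blocks every secant of K'
    rintro p hp q hq hpq
    rcases hp with ⟨A, hA, rfl⟩ | ⟨p', ⟨A, hA, rfl⟩, rfl⟩ <;>
      rcases hq with ⟨B, hB, rfl⟩ | ⟨q', ⟨B, hB, rfl⟩, rfl⟩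
    · -- both affine
      have hAB : A ≠ B := fun h => hpq (by rw [h])
      have hAB0 : A + B ≠ 0 := fun h => hAB (hP2 A B h)
      refine ⟨dPt (A + B), Or.inl ⟨A + B, ⟨G.add_mem hA hB, by simpa using hAB0⟩, rfl⟩, ?_⟩
      rw [dPt_eq hAB0]
      unfold affPt
      apply ArcAux.coll3_span
      rw [Submodule.mem_span_pair]
      refine ⟨1, 1, ?_⟩
      funext i
      fin_cases i <;>
        simp [Prod.fst_add, Prod.snd_add] <;>
        linear_combination h2K
    · -- affine and homology image
      refine ⟨qPt l a1 a2 hl3 (A + B), Or.inr ⟨A + B, G.add_mem hA hB, rfl⟩, ?_⟩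
      rw [homology_affPt hl0]
      unfold affPt qPt
      apply ArcAux.coll3_span
      rw [Submodule.mem_span_pair]
      refine ⟨l, 1, ?_⟩
      funext i
      fin_cases i <;> simp [Prod.fst_add, Prod.snd_add] <;> ring
    · -- homology image and affine
      refine ⟨qPt l a1 a2 hl3 (A + B), Or.inr ⟨A + B, G.add_mem hA hB, rfl⟩, ?_⟩
      rw [homology_affPt hl0]
      unfold affPt qPt
      apply ArcAux.coll3_span
      rw [Submodule.mem_span_pair]
      refine ⟨1, l, ?_⟩
      funext i
      fin_cases i <;> simp [Prod.fst_add, Prod.snd_add] <;> ring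
    · -- both homology images
      have hAB : A ≠ B := by
        intro h
        apply hpq
        rw [h]
      have hAB0 : A + B ≠ 0 := fun h => hAB (hP2 A B h)
      refine ⟨dPt (A + B), Or.inl ⟨A + B, ⟨G.add_mem hA hB, by simpa using hAB0⟩, rfl⟩, ?_⟩
      rw [homology_affPt hl0, homology_affPt hl0, dPt_eq hAB0]
      apply ArcAux.coll3_span
      rw [Submodule.mem_span_pair]
      refine ⟨l⁻¹, l⁻¹, ?_⟩
      funext i
      fin_cases i <;> simp [Prod.fst_add, Prod.snd_add]
      · linear_combination (A.1 + B.1) * hli + (l⁻¹ * a1) * h2K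
      · linear_combination (A.2 + B.2) * hli + (l⁻¹ * a2) * h2K
      · linear_combination l⁻¹ * h2K
  · -- cardinality
    have hGcard : (G : Set (K × K)).ncard = k := by
      rw [← Nat.card_coe_set_eq]
      exact hk
    have hD : (dPt '' ((G : Set (K × K)) \ {0})).ncard = k - 1 := by
      rw [Set.ncard_image_of_injOn hinjD, Set.ncard_diff_singleton_of_mem hzero, hGcard]
    have hQ : (qPt l a1 a2 hl3 '' (G : Set (K × K))).ncard = k := by
      rw [Set.ncard_image_of_injective _ hinjQ, hGcard]
    have hdisjDQ : Disjoint (dPt '' ((G : Set (K × K)) \ {0}))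
        (qPt l a1 a2 hl3 '' (G : Set (K × K))) := by
      rw [Set.disjoint_left]
      rintro b ⟨C, ⟨hCG, hC0⟩, rfl⟩ ⟨C', hC'G, hEq⟩
      rw [Set.mem_singleton_iff] at hC0
      rw [qPt, dPt_eq hC0, ArcAux.mk3_eq_iff] at hEq
      obtain ⟨μ, hμ, _, _, h3⟩ := hEq
      rw [mul_zero] at h3
      exact hl3 h3
    rw [Set.ncard_union_eq hdisjDQ, hD, hQ]
    omega
  · -- B is not contained in a line
    rintro ⟨L, ⟨W, hW2, rfl⟩, hBL⟩
    have hGcard : (G : Set (K × K)).ncard = k := by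
      rw [← Nat.card_coe_set_eq]
      exact hk
    have hcard1 : 1 < ((G : Set (K × K)) \ {0}).ncard := by
      rw [Set.ncard_diff_singleton_of_mem hzero, hGcard]
      omega
    obtain ⟨C1, hC1, C2, hC2, hneC⟩ := (Set.one_lt_ncard (Set.toFinite _)).mp hcard1
    have hC10 : C1 ≠ 0 := by
      have := hC1.2
      simpa using this
    have hC20 : C2 ≠ 0 := by
      have := hC2.2
      simpa using this
    have hv1 : ![C1.1, C1.2, 0] ∈ W := by
      have hp1 := hBL (Or.inl ⟨C1, hC1, rfl⟩)
      rw [Set.mem_setOf_eq, dPt_eq hC10, Projectivization.submodule_mk,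
        Submodule.span_singleton_le_iff_mem] at hp1
      exact hp1
    have hv2 : ![C2.1, C2.2, 0] ∈ W := by
      have hp2 := hBL (Or.inl ⟨C2, hC2, rfl⟩)
      rw [Set.mem_setOf_eq, dPt_eq hC20, Projectivization.submodule_mk,
        Submodule.span_singleton_le_iff_mem] at hp2
      exact hp2
    have hnePt : dPt C1 ≠ dPt C2 := fun h => hneC (hinjD hC1 hC2 h)
    have hlin : LinearIndependent K ![![C1.1, C1.2, 0], ![C2.1, C2.2, 0]] := by
      rw [LinearIndependent.pair_iff' (vec3_ne_zero_pair (fun e => hC10 (by rw [e]; rfl)))]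
      intro a ha
      apply hnePt
      have ha0 : a ≠ 0 := by
        rintro rfl
        rw [zero_smul] at ha
        exact vec3_ne_zero_pair (fun e => hC20 (by rw [e]; rfl)) ha.symm
      rw [dPt_eq hC10, dPt_eq hC20, ArcAux.mk_eq_iff]
      exact ⟨a⁻¹, inv_ne_zero ha0, by
        rw [← ha, smul_smul, inv_mul_cancel₀ ha0, one_smul]⟩
    have hrange : Set.range ![![C1.1, C1.2, 0], ![C2.1, C2.2, 0]] =
        ({![C1.1, C1.2, 0], ![C2.1, C2.2, 0]} : Set (Fin 3 → K)) := by
      ext x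
      simp [Fin.exists_fin_two, or_comm]
    have hrank : Module.finrank K
        (Submodule.span K ({![C1.1, C1.2, 0], ![C2.1, C2.2, 0]} : Set (Fin 3 → K))) = 2 := by
      have := finrank_span_eq_card hlin
      rw [hrange] at this
      simpa using this
    have hspan : Submodule.span K ({![C1.1, C1.2, 0], ![C2.1, C2.2, 0]} : Set (Fin 3 → K)) = W := by
      apply Submodule.eq_of_le_of_finrank_le
      · rw [Submodule.span_le]
        rintro x (rfl | rfl)
        · exact hv1
        · exact hv2
      · rw [hW2, hrank]
    have hq0 : ![l * (0 : K × K).1 + a1, l * (0 : K × K).2 + a2, l + 1] ∈ W := by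
      have hp0 := hBL (Or.inr ⟨0, hzero, rfl⟩)
      rw [Set.mem_setOf_eq, qPt, Projectivization.submodule_mk,
        Submodule.span_singleton_le_iff_mem] at hp0
      exact hp0
    rw [← hspan, Submodule.mem_span_pair] at hq0
    obtain ⟨a, b, hab⟩ := hq0
    have h3 := congrFun hab 2
    simp at h3
    exact hl3 h3.symm
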